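/- Let ρ be a nonnegative initial mass configuration on ℤ² with finite total mass and bounded support, and let T be a legal toppling scheme for ρ. Then as k → ∞ the configurations ν_k and the emitted-mass functions u_k converge pointwise to limits ν and u; moreover the limiting configuration satisfies ν(x) ≤ 1 for all x ∈ ℤ² and ν = ρ + L_{M,1}u. -/

import Mathlib

open MeasureTheory Filter Metric Real
open scoped Topology ENNReal

noncomputable section

namespace TruncatedSandpile

/-- The plane `ℝ²` with the Euclidean norm. -/
abbrev R2 : Type := EuclideanSpace ℝ (Fin 2)

/-- The Euclidean inner product `θ · x` on `ℝ²`. -/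
def dotp (θ x : R2) : ℝ := @inner ℝ _ _ θ x

/-- The point of the rescaled lattice `(1/n)ℤ²` corresponding to `z ∈ ℤ²`. -/
def pt (n : ℕ) (z : ℤ × ℤ) : R2 :=
  (WithLp.equiv 2 (Fin 2 → ℝ)).symm ![(z.1 : ℝ) / n, (z.2 : ℝ) / n]

/-- The square `y + [-1/(2n), 1/(2n)]²`. -/
def latSq (n : ℕ) (y : R2) : Set R2 :=
  {x : R2 | ∀ i : Fin 2, |x i - y i| ≤ 1 / (2 * (n : ℝ))}

/-- `F_n(y) = n² · μ(y^□ ∩ (B_M \ B_{r/n}))`. -/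
def Fn (r M : ℝ) (n : ℕ) (y : R2) : ℝ :=
  (n : ℝ) ^ 2 * (volume (latSq n y ∩ (ball (0 : R2) M \ ball 0 (r / n)))).toReal

/-- The constant `k_n`. -/
def kn (α r M : ℝ) (n : ℕ) : ℝ :=
  (n : ℝ) ^ (2 - α) / 4 *
    ((∫ y in ball (0 : R2) M, ‖y‖ ^ (-α)) -
      ((n : ℝ) ^ 2)⁻¹ * ∑' z : ℤ × ℤ, if z ≠ 0 then Fn r M n (pt n z) / ‖pt n z‖ ^ α else 0)

/-- The unnormalized jump weights defining `p_n`. -/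
def pnRaw (α r M : ℝ) (n : ℕ) (z : ℤ × ℤ) : ℝ :=
  if z = 0 then 0 else
    kn α r M n * (if ‖pt n z‖ = 1 / n then 1 else 0) +
      Fn r M n (pt n z) / ((n : ℝ) ^ (2 + α) * ‖pt n z‖ ^ (2 + α))

/-- The normalizing constant `c_n`, making `p_n` a probability. -/
def cseq (α r M : ℝ) (n : ℕ) : ℝ := (∑' z : ℤ × ℤ, pnRaw α r M n z)⁻¹

/-- The jump probability `p_n` on `(1/n)ℤ²` (indexed by `ℤ²`). -/
def pn (α r M : ℝ) (n : ℕ) (z : ℤ × ℤ) : ℝ := cseq α r M n * pnRaw α r M n z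

/-- `c = lim_{n→∞} c_n`. -/
def climit (α r M : ℝ) : ℝ := limUnder atTop (cseq α r M)

/-- `ψ_M(θ) = cc ∫_{B_M} (1 - cos(θ·y))/|y|^{2+α} dy`. -/
def psiM (α M cc : ℝ) (θ : R2) : ℝ :=
  cc * ∫ y in ball (0 : R2) M, (1 - Real.cos (dotp θ y)) / ‖y‖ ^ (2 + α)

/-- `ψ_{M,n}(θ) = n^α Σ_y p_n(y)(1 - cos(θ·y))`. -/
def psiMn (α r M : ℝ) (n : ℕ) (θ : R2) : ℝ :=
  (n : ℝ) ^ α * ∑' z : ℤ × ℤ, pn α r M n z * (1 - Real.cos (dotp θ (pt n z)))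

/-- The continuous Green's function `G_M` (with constant `cc` and base point `x₀`). -/
def GM (α M cc : ℝ) (x₀ x : R2) : ℝ :=
  (1 / (2 * π) ^ 2) *
    ∫ θ : R2, (Real.cos (dotp θ x) - Real.cos (dotp θ x₀)) / psiM α M cc θ

/-- The box `[-nπ, nπ]²`. -/
def box (n : ℕ) : Set R2 := {θ : R2 | ∀ i : Fin 2, |θ i| ≤ (n : ℝ) * π}

/-- The rescaled discrete Green's function `G_{M,n}`. -/
def GMn (α r M : ℝ) (n : ℕ) (x₀ x : R2) : ℝ :=
  (1 / (2 * π) ^ 2) *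
    ∫ θ in box n, (Real.cos (dotp θ x) - Real.cos (dotp θ x₀)) / psiMn α r M n θ

/-- `σ_M² = cc ∫_{B_M} |y|^{-α} dy`. -/
def sigmaM2 (α M cc : ℝ) : ℝ := cc * ∫ y in ball (0 : R2) M, ‖y‖ ^ (-α)

/-- `σ_{M,n}² = n^α Σ_y p_n(y)|y|²`. -/
def sigmaMn2 (α r M : ℝ) (n : ℕ) : ℝ :=
  (n : ℝ) ^ α * ∑' z : ℤ × ℤ, pn α r M n z * ‖pt n z‖ ^ 2

/-- The truncated fractional Laplacian `L_M` (with constant `cc`). -/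
def LM (α M cc : ℝ) (f : R2 → ℝ) (x : R2) : ℝ :=
  cc / 2 * ∫ y in ball (0 : R2) M, (f (x + y) + f (x - y) - 2 * f x) / ‖y‖ ^ (2 + α)

/-- The discrete operator `L_{M,n}` acting on lattice functions `g : ℤ² → ℝ`. -/
def LMnD (α r M : ℝ) (n : ℕ) (g : ℤ × ℤ → ℝ) (z : ℤ × ℤ) : ℝ :=
  (n : ℝ) ^ α * ∑' w : ℤ × ℤ, pn α r M n w * (g (z + w) - g z)

/-- The discrete operator `L_{M,n}` acting on functions on `ℝ²`. -/
def LMnF (α r M : ℝ) (n : ℕ) (f : R2 → ℝ) (x : R2) : ℝ :=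
  (n : ℝ) ^ α * ∑' w : ℤ × ℤ, pn α r M n w * (f (x + pt n w) - f x)

/-- The continuous obstacle `γ`. -/
def gammaC (α M cc : ℝ) (x₀ : R2) (ρ : R2 → ℝ) (x : R2) : ℝ :=
  -‖x‖ ^ 2 / sigmaM2 α M cc - ∫ y : R2, GM α M cc x₀ (x - y) * ρ y

/-- The discrete obstacle `γ_n` (as a function on `ℤ²`, representing `(1/n)ℤ²`). -/
def gammaD (α r M : ℝ) (n : ℕ) (x₀ : R2) (ρ : R2 → ℝ) (z : ℤ × ℤ) : ℝ :=
  -‖pt n z‖ ^ 2 / sigmaMn2 α r M n -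
    ((n : ℝ) ^ 2)⁻¹ * ∑' w : ℤ × ℤ, GMn α r M n x₀ (pt n z - pt n w) * ρ (pt n w)

/-- `f ∈ L¹_loc` is superharmonic w.r.t. `L_M` on an open set `Ω` if
`∫ f · L_M φ ≤ 0` for all nonnegative smooth compactly supported `φ` with support in `Ω`. -/
def Superharmonic (α M cc : ℝ) (f : R2 → ℝ) (Ω : Set R2) : Prop :=
  ∀ φ : R2 → ℝ, ContDiff ℝ (⊤ : ℕ∞) φ → HasCompactSupport φ → (∀ x, 0 ≤ φ x) →
    tsupport φ ⊆ Ω → (∫ x : R2, f x * LM α M cc φ x) ≤ 0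

/-- The least superharmonic majorant `s` of the continuous obstacle. -/
def sMaj (α M cc : ℝ) (x₀ : R2) (ρ : R2 → ℝ) (x : R2) : ℝ :=
  sInf {v : ℝ | ∃ f : R2 → ℝ, Continuous f ∧ Superharmonic α M cc f Set.univ ∧
    (∀ y, gammaC α M cc x₀ ρ y ≤ f y) ∧ v = f x}

/-- The discrete majorant `s_n` of the discrete obstacle. -/
def sMajD (α r M : ℝ) (n : ℕ) (x₀ : R2) (ρ : R2 → ℝ) (z : ℤ × ℤ) : ℝ :=
  sInf {v : ℝ | ∃ f : ℤ × ℤ → ℝ, (∀ w, LMnD α r M n f w ≤ 0) ∧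
    (∀ w, gammaD α r M n x₀ ρ w ≤ f w) ∧ v = f z}

/-- The discrete odometer `u_n = s_n - γ_n`. -/
def uD (α r M : ℝ) (n : ℕ) (x₀ : R2) (ρ : R2 → ℝ) (z : ℤ × ℤ) : ℝ :=
  sMajD α r M n x₀ ρ z - gammaD α r M n x₀ ρ z

/-- The discrete final distribution `ν_n = ρ_n + L_{M,n} u_n`. -/
def nuD (α r M : ℝ) (n : ℕ) (x₀ : R2) (ρ : R2 → ℝ) (z : ℤ × ℤ) : ℝ :=
  ρ (pt n z) + LMnD α r M n (uD α r M n x₀ ρ) z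

/-- The lattice point `x^{::}` of `(1/n)ℤ²` whose half-open square
`(x^{::} - 1/(2n), x^{::} + 1/(2n)]²` contains `x` (ties broken to the right). -/
def nearPt (n : ℕ) (x : R2) : ℤ × ℤ := (⌈(n : ℝ) * x 0 - 1 / 2⌉, ⌈(n : ℝ) * x 1 - 1 / 2⌉)

/-- The extension `g^□` of a lattice function `g` to `ℝ²`: `g^□(x) = g(x^{::})`. -/
def extQ (n : ℕ) (g : ℤ × ℤ → ℝ) (x : R2) : ℝ := g (nearPt n x)

/-- The constant `β_n = (2/(π σ_M²))(c/c_n - 1)`. -/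
def betan (α r M : ℝ) (n : ℕ) : ℝ :=
  2 / (π * sigmaM2 α M (climit α r M)) * (climit α r M / cseq α r M n - 1)

/-- The auxiliary function `h_M(x) = (1/(π²σ_M²)) ∫_{B_{|x|/M} \ B₁} cos(θ·ω)/|θ|² dθ`. -/
def hM (α M cc : ℝ) (ω x : R2) : ℝ :=
  1 / (π ^ 2 * sigmaM2 α M cc) *
    ∫ θ in ball (0 : R2) (‖x‖ / M) \ ball 0 1, Real.cos (dotp θ ω) / ‖θ‖ ^ 2

/-- Toppling the (full) site `x`: `x` keeps mass 1 and distributes the excess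
according to `p₁`. -/
def topple (α r M : ℝ) (m : ℤ × ℤ → ℝ) (x : ℤ × ℤ) : ℤ × ℤ → ℝ :=
  fun y => if y = x then 1 else m y + (m x - 1) * pn α r M 1 (y - x)

/-- The mass configuration after the first `k` topplings of the scheme `T`,
started from `ρ`. -/
def conf (α r M : ℝ) (ρ : ℤ × ℤ → ℝ) (T : ℕ → ℤ × ℤ) : ℕ → ℤ × ℤ → ℝ
  | 0 => ρ
  | k + 1 => topple α r M (conf α r M ρ T k) (T k)

/-- The total mass emitted from each site during the first `k` topplings. -/
def emitted (α r M : ℝ) (ρ : ℤ × ℤ → ℝ) (T : ℕ → ℤ × ℤ) : ℕ → ℤ × ℤ → ℝ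
  | 0 => fun _ => 0
  | k + 1 => fun y =>
      emitted α r M ρ T k y + if y = T k then conf α r M ρ T k y - 1 else 0

/-- A legal toppling scheme: only full sites are toppled, and every site that is
full at some stage is toppled infinitely often afterwards. -/
def LegalScheme (α r M : ℝ) (ρ : ℤ × ℤ → ℝ) (T : ℕ → ℤ × ℤ) : Prop :=
  (∀ k, 1 ≤ conf α r M ρ T k (T k)) ∧
  (∀ k x, 1 ≤ conf α r M ρ T k x → ∀ N, ∃ j, N ≤ j ∧ T j = x)


/-! ### Auxiliary lemmas -/

section AuxGeom

lemma pt_apply0 (n : ℕ) (z : ℤ × ℤ) : pt n z 0 = (z.1 : ℝ) / n := by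
  simp [pt, WithLp.equiv_symm_apply]

lemma pt_apply1 (n : ℕ) (z : ℤ × ℤ) : pt n z 1 = (z.2 : ℝ) / n := by
  simp [pt, WithLp.equiv_symm_apply]

lemma pt_neg (n : ℕ) (z : ℤ × ℤ) : pt n (-z) = -pt n z := by
  ext i
  fin_cases i <;>
    simp [pt, WithLp.equiv_symm_apply, neg_div]

lemma abs_coord_le_norm (x : R2) (i : Fin 2) : |x i| ≤ ‖x‖ := by
  rw [EuclideanSpace.norm_eq]
  rw [show |x i| = Real.sqrt (‖x i‖ ^ 2) by
    rw [Real.sqrt_sq_eq_abs, Real.norm_eq_abs, abs_abs]]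
  apply Real.sqrt_le_sqrt
  exact Finset.single_le_sum (f := fun j => ‖x j‖ ^ 2)
    (fun j _ => sq_nonneg _) (Finset.mem_univ i)

lemma norm_pt_one (z : ℤ × ℤ) :
    ‖pt 1 z‖ = Real.sqrt ((z.1 : ℝ) ^ 2 + (z.2 : ℝ) ^ 2) := by
  rw [EuclideanSpace.norm_eq, Fin.sum_univ_two, pt_apply0, pt_apply1]
  simp [Real.norm_eq_abs, sq_abs]

lemma norm_pt_one_oneZero : ‖pt 1 ((1, 0) : ℤ × ℤ)‖ = 1 := by
  rw [norm_pt_one]; norm_num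

lemma Fn_nonneg (r M : ℝ) (n : ℕ) (y : R2) : 0 ≤ Fn r M n y :=
  mul_nonneg (by positivity) ENNReal.toReal_nonneg

lemma Fn_neg (r M : ℝ) (n : ℕ) (y : R2) : Fn r M n (-y) = Fn r M n y := by
  unfold Fn
  congr 2
  have h : latSq n (-y) ∩ (ball (0 : R2) M \ ball 0 (r / n)) =
      Neg.neg ⁻¹' (latSq n y ∩ (ball (0 : R2) M \ ball 0 (r / n))) := by
    ext x
    simp only [Set.mem_inter_iff, Set.mem_preimage, latSq, Set.mem_setOf_eq,
      Set.mem_diff, mem_ball_zero_iff, norm_neg]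
    constructor
    · rintro ⟨h1, h2⟩
      refine ⟨fun i => ?_, h2⟩
      have := h1 i
      simp only [PiLp.neg_apply] at this ⊢
      rw [show -x i - y i = -(x i - -y i) by ring, abs_neg]
      exact this
    · rintro ⟨h1, h2⟩
      refine ⟨fun i => ?_, h2⟩
      have := h1 i
      simp only [PiLp.neg_apply] at this ⊢
      rw [show x i - -y i = -(-x i - y i) by ring, abs_neg]
      exact this
  rw [h, Measure.measure_preimage_neg]

lemma pnRaw_eq_zero_of_far (α r M : ℝ) (hM : 0 < M) (z : ℤ × ℤ) (i : Fin 2)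
    (hcb : M + 1 ≤ |pt 1 z i|) : pnRaw α r M 1 z = 0 := by
  by_cases hz : z = 0
  · simp [pnRaw, hz]
  have hnorm : M + 1 ≤ ‖pt 1 z‖ := le_trans hcb (abs_coord_le_norm _ i)
  have hind : ¬ (‖pt 1 z‖ = 1 / ((1:ℕ) : ℝ)) := by
    intro h
    rw [h] at hnorm
    norm_num at hnorm
    linarith
  have hFn : Fn r M 1 (pt 1 z) = 0 := by
    unfold Fn
    have hempty : latSq 1 (pt 1 z) ∩ (ball (0 : R2) M \ ball 0 (r / ((1:ℕ):ℝ))) = ∅ := by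
      ext x
      simp only [Set.mem_inter_iff, Set.mem_empty_iff_false, iff_false, latSq,
        Set.mem_setOf_eq, Set.mem_diff, mem_ball_zero_iff, not_and, Nat.cast_one]
      intro h1 h2 _
      exfalso
      have hxi := h1 i
      have : M + 1/2 ≤ |x i| := by
        have habs : |pt 1 z i| - |x i| ≤ |x i - pt 1 z i| := by
          rw [abs_sub_comm]
          exact abs_sub_abs_le_abs_sub _ _
        norm_num at hxi
        linarith
      have := abs_coord_le_norm x i
      linarith
    rw [hempty]
    simp
  unfold pnRaw
  rw [if_neg hz, if_neg hind, hFn]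
  simp

/-- Finite set outside which `pnRaw α r M 1` vanishes. -/
def suppF (M : ℝ) : Finset (ℤ × ℤ) :=
  Finset.Icc (-(⌈M⌉ + 2), -(⌈M⌉ + 2)) (⌈M⌉ + 2, ⌈M⌉ + 2)

lemma pnRaw_eq_zero (α r M : ℝ) (hM : 0 < M) {z : ℤ × ℤ} (hz : z ∉ suppF M) :
    pnRaw α r M 1 z = 0 := by
  have hMceil : M ≤ (⌈M⌉ : ℝ) := Int.le_ceil M
  simp only [suppF, Finset.mem_Icc, Prod.le_def] at hz
  have key : ∀ c : ℝ, (c ≤ -((⌈M⌉:ℝ)+3) ∨ ((⌈M⌉:ℝ)+3) ≤ c) → M + 1 ≤ |c| := by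
    intro c hc
    rcases hc with hc | hc
    · exact le_abs.mpr (Or.inr (by linarith))
    · exact le_abs.mpr (Or.inl (by linarith))
  have hd : z.1 ≤ -(⌈M⌉+3) ∨ (⌈M⌉+3) ≤ z.1 ∨ z.2 ≤ -(⌈M⌉+3) ∨ (⌈M⌉+3) ≤ z.2 := by
    omega
  rcases hd with h | h | h | h
  · refine pnRaw_eq_zero_of_far α r M hM z 0 ?_
    rw [pt_apply0]; push_cast; rw [div_one]
    refine key _ (Or.inl ?_)
    exact_mod_cast (by exact_mod_cast h : ((z.1:ℤ):ℝ) ≤ ((-(⌈M⌉+3) : ℤ) : ℝ))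
  · refine pnRaw_eq_zero_of_far α r M hM z 0 ?_
    rw [pt_apply0]; push_cast; rw [div_one]
    refine key _ (Or.inr ?_)
    exact_mod_cast (by exact_mod_cast h : (((⌈M⌉+3) : ℤ) : ℝ) ≤ ((z.1:ℤ):ℝ))
  · refine pnRaw_eq_zero_of_far α r M hM z 1 ?_
    rw [pt_apply1]; push_cast; rw [div_one]
    refine key _ (Or.inl ?_)
    exact_mod_cast (by exact_mod_cast h : ((z.2:ℤ):ℝ) ≤ ((-(⌈M⌉+3) : ℤ) : ℝ))
  · refine pnRaw_eq_zero_of_far α r M hM z 1 ?_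
    rw [pt_apply1]; push_cast; rw [div_one]
    refine key _ (Or.inr ?_)
    exact_mod_cast (by exact_mod_cast h : (((⌈M⌉+3) : ℤ) : ℝ) ≤ ((z.2:ℤ):ℝ))

lemma pnRaw_nonneg (α r M : ℝ) (hk : 0 < kn α r M 1) (z : ℤ × ℤ) :
    0 ≤ pnRaw α r M 1 z := by
  unfold pnRaw
  by_cases hz : z = 0
  · simp [hz]
  rw [if_neg hz]
  apply add_nonneg
  · apply mul_nonneg hk.le
    split <;> norm_num
  · exact div_nonneg (Fn_nonneg r M 1 _)
      (mul_nonneg (Real.rpow_nonneg (by positivity) _)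
        (Real.rpow_nonneg (norm_nonneg _) _))

lemma pnRaw_ge_kn (α r M : ℝ) : kn α r M 1 ≤ pnRaw α r M 1 (1, 0) := by
  unfold pnRaw
  rw [if_neg (by simp [Prod.ext_iff] : ¬((1, 0) : ℤ × ℤ) = 0)]
  rw [if_pos (by rw [norm_pt_one_oneZero]; norm_num)]
  have : 0 ≤ Fn r M 1 (pt 1 (1, 0)) / (((1:ℕ) : ℝ) ^ (2 + α) * ‖pt 1 ((1,0) : ℤ × ℤ)‖ ^ (2 + α)) :=
    div_nonneg (Fn_nonneg r M 1 _)
      (mul_nonneg (Real.rpow_nonneg (by positivity) _)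
        (Real.rpow_nonneg (norm_nonneg _) _))
  linarith

lemma pnRaw_neg (α r M : ℝ) (z : ℤ × ℤ) :
    pnRaw α r M 1 (-z) = pnRaw α r M 1 z := by
  by_cases hz : z = 0
  · subst hz; rw [neg_zero]
  unfold pnRaw
  rw [if_neg (by simpa using hz), if_neg hz, pt_neg, norm_neg, Fn_neg]

lemma tsum_eq_zero_of_odd {f : ℤ × ℤ → ℝ} (hodd : ∀ w, f (-w) = - f w) :
    ∑' w, f w = 0 := by
  have h := (Equiv.neg (ℤ × ℤ)).tsum_eq f
  simp only [Equiv.neg_apply] at h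
  rw [tsum_congr hodd, tsum_neg] at h
  linarith

def phi (z : ℤ × ℤ) : ℝ := (z.1 : ℝ) ^ 2 + (z.2 : ℝ) ^ 2

lemma phi_nonneg (z : ℤ × ℤ) : 0 ≤ phi z :=
  add_nonneg (sq_nonneg _) (sq_nonneg _)

end AuxGeom


section Dyn

variable {α r M : ℝ} {F : Finset (ℤ × ℤ)} {ρ : ℤ × ℤ → ℝ} {T : ℕ → ℤ × ℤ}

lemma psummable (hpF : ∀ z ∉ F, pn α r M 1 z = 0) : Summable (pn α r M 1) :=
  summable_of_ne_finset_zero hpF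

lemma topple_eq (m : ℤ × ℤ → ℝ) (x : ℤ × ℤ) :
    topple α r M m x = fun y =>
      (m y + (m x - 1) * pn α r M 1 (y - x)) +
        (if y = x then 1 - m x - (m x - 1) * pn α r M 1 (y - x) else 0) := by
  funext y
  by_cases h : y = x
  · subst h; simp [topple]
  · simp [topple, h]

lemma summable_shifted (hpF : ∀ z ∉ F, pn α r M 1 z = 0) (x : ℤ × ℤ) :
    Summable (fun y => pn α r M 1 (y - x)) := by
  have h := ((Equiv.subRight x).summable_iff (f := pn α r M 1)).mpr (psummable hpF)
  simpa only [Function.comp_def, Equiv.subRight_apply] using h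

lemma tsum_shifted (hpsum : ∑' z, pn α r M 1 z = 1) (x : ℤ × ℤ) :
    ∑' y, pn α r M 1 (y - x) = 1 := by
  have h := (Equiv.subRight x).tsum_eq (pn α r M 1)
  simp only [Equiv.subRight_apply] at h
  exact h.trans hpsum

lemma summable_g (hpF : ∀ z ∉ F, pn α r M 1 z = 0) (m : ℤ × ℤ → ℝ)
    (hm : Summable m) (x : ℤ × ℤ) :
    Summable (fun y => m y + (m x - 1) * pn α r M 1 (y - x)) :=
  hm.add (((summable_shifted hpF x)).mul_left _)

lemma summable_topple (hpF : ∀ z ∉ F, pn α r M 1 z = 0) (m : ℤ × ℤ → ℝ)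
    (hm : Summable m) (x : ℤ × ℤ) :
    Summable (topple α r M m x) := by
  rw [topple_eq]
  exact (summable_g hpF m hm x).add
    (summable_of_ne_finset_zero (s := {x}) (by intro b hb; simp at hb; simp [hb]))

lemma tsum_topple (hp0 : pn α r M 1 0 = 0) (hpF : ∀ z ∉ F, pn α r M 1 z = 0)
    (hpsum : ∑' z, pn α r M 1 z = 1) (m : ℤ × ℤ → ℝ) (hm : Summable m) (x : ℤ × ℤ) :
    ∑' y, topple α r M m x y = ∑' y, m y := by
  rw [topple_eq]
  rw [Summable.tsum_add (summable_g hpF m hm x)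
    (summable_of_ne_finset_zero (s := {x}) (by intro b hb; simp at hb; simp [hb]))]
  rw [Summable.tsum_add hm ((summable_shifted hpF x).mul_left _)]
  rw [tsum_mul_left, tsum_shifted hpsum]
  have h2 : ∑' y, (if y = x then 1 - m x - (m x - 1) * pn α r M 1 (y - x) else 0)
      = 1 - m x := by
    rw [show (fun y => (if y = x then 1 - m x - (m x - 1) * pn α r M 1 (y - x) else 0))
        = fun y => (if y = x then 1 - m x else 0) by
      funext y; by_cases h : y = x <;> simp [h, hp0]]
    exact tsum_ite_eq x _
  rw [h2]
  ring

lemma conf_summable (hpF : ∀ z ∉ F, pn α r M 1 z = 0) (hρs : Summable ρ) :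
    ∀ k, Summable (conf α r M ρ T k)
  | 0 => hρs
  | k + 1 => summable_topple hpF _ (conf_summable hpF hρs k) _

lemma conf_tsum (hp0 : pn α r M 1 0 = 0) (hpF : ∀ z ∉ F, pn α r M 1 z = 0)
    (hpsum : ∑' z, pn α r M 1 z = 1) (hρs : Summable ρ) :
    ∀ k, ∑' y, conf α r M ρ T k y = ∑' y, ρ y
  | 0 => rfl
  | k + 1 => by
      rw [show conf α r M ρ T (k+1) = topple α r M (conf α r M ρ T k) (T k) from rfl]
      rw [tsum_topple hp0 hpF hpsum _ (conf_summable hpF hρs k)]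
      exact conf_tsum hp0 hpF hpsum hρs k

lemma conf_nonneg (hpnn : ∀ z, 0 ≤ pn α r M 1 z) (hρ0 : ∀ x, 0 ≤ ρ x)
    (hT : LegalScheme α r M ρ T) :
    ∀ k x, 0 ≤ conf α r M ρ T k x
  | 0, x => hρ0 x
  | k + 1, x => by
      have hfull := hT.1 k
      by_cases h : x = T k
      · simp [conf, topple, h]
      · simp only [conf, topple, h, if_false]
        have h1 := conf_nonneg hpnn hρ0 hT k x
        have h2 := hpnn (x - T k)
        nlinarith

lemma conf_le_total (hp0 : pn α r M 1 0 = 0) (hpnn : ∀ z, 0 ≤ pn α r M 1 z)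
    (hpF : ∀ z ∉ F, pn α r M 1 z = 0) (hpsum : ∑' z, pn α r M 1 z = 1)
    (hρ0 : ∀ x, 0 ≤ ρ x) (hρs : Summable ρ) (hT : LegalScheme α r M ρ T)
    (k : ℕ) (x : ℤ × ℤ) : conf α r M ρ T k x ≤ ∑' y, ρ y := by
  rw [← conf_tsum hp0 hpF hpsum hρs (T := T) k]
  exact Summable.le_tsum (conf_summable hpF hρs k) x
    (fun j _ => conf_nonneg hpnn hρ0 hT k j)

lemma toppled_ge_one (hpnn : ∀ z, 0 ≤ pn α r M 1 z) (hρ0 : ∀ x, 0 ≤ ρ x)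
    (hT : LegalScheme α r M ρ T) :
    ∀ j k, j < k → 1 ≤ conf α r M ρ T k (T j) := by
  intro j k hjk
  induction k with
  | zero => omega
  | succ k ih =>
    by_cases h : T j = T k
    · simp [conf, topple, h]
    · rcases Nat.lt_or_ge j k with h2 | h2
      · have h3 := ih h2
        simp only [conf, topple, h, if_false]
        have hfull := hT.1 k
        have h4 := hpnn (T j - T k)
        nlinarith
      · have : j = k := by omega
        subst this
        exact absurd rfl h

lemma range_T_finite (hp0 : pn α r M 1 0 = 0) (hpnn : ∀ z, 0 ≤ pn α r M 1 z)
    (hpF : ∀ z ∉ F, pn α r M 1 z = 0) (hpsum : ∑' z, pn α r M 1 z = 1)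
    (hρ0 : ∀ x, 0 ≤ ρ x) (hρs : Summable ρ) (hT : LegalScheme α r M ρ T) :
    (Set.range T).Finite := by
  classical
  by_contra hinf
  set m₀ := ∑' y, ρ y with hm₀
  obtain ⟨Q, hQsub, hQcard⟩ :=
    Set.Infinite.exists_subset_card_eq hinf (⌊m₀⌋₊ + 1)
  have hex : ∀ x ∈ Q, ∃ j, T j = x := fun x hx => hQsub hx
  set K : ℕ := (Q.sup fun x => if h : ∃ j, T j = x then Nat.find h + 1 else 0) with hK
  have hfull : ∀ x ∈ Q, 1 ≤ conf α r M ρ T K x := by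
    intro x hx
    obtain ⟨j, hj⟩ := hex x hx
    have hh : ∃ j, T j = x := ⟨j, hj⟩
    have hjK : Nat.find hh < K := by
      have : (if h : ∃ j, T j = x then Nat.find h + 1 else 0) ≤ K :=
        Finset.le_sup (f := fun x => if h : ∃ j, T j = x then Nat.find h + 1 else 0) hx
      rw [dif_pos hh] at this
      omega
    have := toppled_ge_one hpnn hρ0 hT (Nat.find hh) K hjK
    rwa [Nat.find_spec hh] at this
  have hsum : (Q.card : ℝ) ≤ m₀ := by
    calc (Q.card : ℝ) = ∑ x ∈ Q, (1 : ℝ) := by simp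
    _ ≤ ∑ x ∈ Q, conf α r M ρ T K x := Finset.sum_le_sum hfull
    _ ≤ ∑' y, conf α r M ρ T K y := Summable.sum_le_tsum Q
        (fun i _ => conf_nonneg hpnn hρ0 hT K i) (conf_summable hpF hρs K)
    _ = m₀ := conf_tsum hp0 hpF hpsum hρs K
  rw [hQcard] at hsum
  have hm₀nn : 0 ≤ m₀ := tsum_nonneg hρ0
  have := Nat.lt_floor_add_one m₀
  push_cast at hsum
  linarith

end Dyn

section Dyn2

variable {α r M : ℝ} {F : Finset (ℤ × ℤ)} {ρ : ℤ × ℤ → ℝ} {T : ℕ → ℤ × ℤ}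

lemma summable_p_mul (hpF : ∀ z ∉ F, pn α r M 1 z = 0) (X : ℤ × ℤ → ℝ) :
    Summable (fun w => pn α r M 1 w * X w) :=
  summable_of_ne_finset_zero (s := F) (fun b hb => by rw [hpF b hb, zero_mul])

lemma conf_supp (hpF : ∀ z ∉ F, pn α r M 1 z = 0) (B : Finset (ℤ × ℤ))
    (hB1 : ∀ x, ρ x ≠ 0 → x ∈ B) (hB2 : ∀ k, T k ∈ B)
    (hB3 : ∀ k w, w ∈ F → T k + w ∈ B) :
    ∀ k y, y ∉ B → conf α r M ρ T k y = 0
  | 0, y, hy => by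
      by_contra h
      exact hy (hB1 y h)
  | k + 1, y, hy => by
      have hyT : y ≠ T k := fun h => hy (h ▸ hB2 k)
      have hp : pn α r M 1 (y - T k) = 0 := by
        apply hpF
        intro hmem
        exact hy (by simpa using hB3 k (y - T k) hmem)
      simp only [conf, topple, hyT, if_false, hp, mul_zero, add_zero]
      exact conf_supp hpF B hB1 hB2 hB3 k y hy

lemma sum_pshift_phi (hpF : ∀ z ∉ F, pn α r M 1 z = 0)
    (hpsum : ∑' z, pn α r M 1 z = 1)
    (hdrift1 : ∑' w : ℤ × ℤ, pn α r M 1 w * ((w.1 : ℤ) : ℝ) = 0)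
    (hdrift2 : ∑' w : ℤ × ℤ, pn α r M 1 w * ((w.2 : ℤ) : ℝ) = 0)
    (B : Finset (ℤ × ℤ)) (s : ℤ × ℤ) (hs : ∀ w ∈ F, s + w ∈ B) :
    ∑ x ∈ B, pn α r M 1 (x - s) * phi x
      = (∑' w, pn α r M 1 w * phi w) + phi s := by
  have hz : ∀ x ∉ B, pn α r M 1 (x - s) * phi x = 0 := by
    intro x hx
    rcases em (x - s ∈ F) with hmem | hmem
    · exact absurd (by simpa using hs _ hmem) hx
    · rw [hpF _ hmem, zero_mul]
  rw [← tsum_eq_sum (L := SummationFilter.unconditional _) hz]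
  have h1 := (Equiv.addLeft s).tsum_eq (fun x => pn α r M 1 (x - s) * phi x)
  simp only [Equiv.coe_addLeft, add_sub_cancel_left] at h1
  rw [← h1]
  have hexp : ∀ w : ℤ × ℤ, pn α r M 1 w * phi (s + w)
      = pn α r M 1 w * phi s + (2 * ((s.1 : ℤ) : ℝ)) * (pn α r M 1 w * ((w.1 : ℤ) : ℝ))
        + (2 * ((s.2 : ℤ) : ℝ)) * (pn α r M 1 w * ((w.2 : ℤ) : ℝ))
        + pn α r M 1 w * phi w := by
    intro w
    simp only [phi, Prod.fst_add, Prod.snd_add]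
    push_cast
    ring
  rw [tsum_congr hexp]
  have S1 : Summable (fun w => pn α r M 1 w * phi s) := summable_p_mul hpF _
  have S2 : Summable (fun w : ℤ × ℤ =>
      (2 * ((s.1 : ℤ) : ℝ)) * (pn α r M 1 w * ((w.1 : ℤ) : ℝ))) :=
    (summable_p_mul hpF _).mul_left _
  have S3 : Summable (fun w : ℤ × ℤ =>
      (2 * ((s.2 : ℤ) : ℝ)) * (pn α r M 1 w * ((w.2 : ℤ) : ℝ))) :=
    (summable_p_mul hpF _).mul_left _
  have S4 : Summable (fun w => pn α r M 1 w * phi w) := summable_p_mul hpF _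
  rw [Summable.tsum_add ((S1.add S2).add S3) S4, Summable.tsum_add (S1.add S2) S3, Summable.tsum_add S1 S2]
  rw [tsum_mul_right, hpsum, one_mul, tsum_mul_left, tsum_mul_left, hdrift1, hdrift2]
  ring

lemma W_step (hp0 : pn α r M 1 0 = 0) (hpF : ∀ z ∉ F, pn α r M 1 z = 0)
    (hpsum : ∑' z, pn α r M 1 z = 1)
    (hdrift1 : ∑' w : ℤ × ℤ, pn α r M 1 w * ((w.1 : ℤ) : ℝ) = 0)
    (hdrift2 : ∑' w : ℤ × ℤ, pn α r M 1 w * ((w.2 : ℤ) : ℝ) = 0)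
    (B : Finset (ℤ × ℤ)) (k : ℕ) (hsB : T k ∈ B)
    (hs : ∀ w ∈ F, T k + w ∈ B) :
    ∑ x ∈ B, conf α r M ρ T (k + 1) x * phi x
      = ∑ x ∈ B, conf α r M ρ T k x * phi x
        + (conf α r M ρ T k (T k) - 1) * (∑' w, pn α r M 1 w * phi w) := by
  classical
  have h1 : conf α r M ρ T (k + 1) = topple α r M (conf α r M ρ T k) (T k) := rfl
  rw [h1, topple_eq]
  have hsplit : ∀ x : ℤ × ℤ,
      ((conf α r M ρ T k x + (conf α r M ρ T k (T k) - 1) * pn α r M 1 (x - T k)) +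
        (if x = T k then 1 - conf α r M ρ T k (T k)
          - (conf α r M ρ T k (T k) - 1) * pn α r M 1 (x - T k) else 0)) * phi x
      = (conf α r M ρ T k x * phi x
          + (conf α r M ρ T k (T k) - 1) * (pn α r M 1 (x - T k) * phi x))
        + (if x = T k then (1 - conf α r M ρ T k (T k)
            - (conf α r M ρ T k (T k) - 1) * pn α r M 1 (x - T k)) * phi x else 0) := by
    intro x
    by_cases h : x = T k <;> simp [h] <;> ring
  rw [Finset.sum_congr rfl (fun x _ => hsplit x)]
  rw [Finset.sum_add_distrib, Finset.sum_add_distrib, ← Finset.mul_sum]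
  rw [sum_pshift_phi hpF hpsum hdrift1 hdrift2 B (T k) hs]
  have hite : ∑ x ∈ B, (if x = T k then (1 - conf α r M ρ T k (T k)
        - (conf α r M ρ T k (T k) - 1) * pn α r M 1 (x - T k)) * phi x else 0)
      = (1 - conf α r M ρ T k (T k)) * phi (T k) := by
    rw [Finset.sum_ite_eq' B (T k)
      (fun x => (1 - conf α r M ρ T k (T k)
        - (conf α r M ρ T k (T k) - 1) * pn α r M 1 (x - T k)) * phi x)]
    rw [if_pos hsB, sub_self, hp0]
    ring
  rw [hite]
  ring

lemma emitted_nonneg (hT : LegalScheme α r M ρ T) :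
    ∀ k x, 0 ≤ emitted α r M ρ T k x
  | 0, _ => le_refl _
  | k + 1, x => by
      have h1 := emitted_nonneg hT k x
      by_cases h : x = T k
      · subst h
        have := hT.1 k
        have hE : emitted α r M ρ T (k+1) (T k)
            = emitted α r M ρ T k (T k) + (conf α r M ρ T k (T k) - 1) := by
          simp [emitted]
        rw [hE]
        linarith
      · simp only [emitted, h, if_false, add_zero]
        exact h1

lemma emitted_mono (hT : LegalScheme α r M ρ T) (k : ℕ) (x : ℤ × ℤ) :
    emitted α r M ρ T k x ≤ emitted α r M ρ T (k + 1) x := by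
  by_cases h : x = T k
  · subst h
    have := hT.1 k
    have hE : emitted α r M ρ T (k+1) (T k)
        = emitted α r M ρ T k (T k) + (conf α r M ρ T k (T k) - 1) := by
      simp [emitted]
    rw [hE]
    linarith
  · simp [emitted, h]

lemma sigma_emitted_le (hp0 : pn α r M 1 0 = 0) (hpF : ∀ z ∉ F, pn α r M 1 z = 0)
    (hpsum : ∑' z, pn α r M 1 z = 1)
    (hdrift1 : ∑' w : ℤ × ℤ, pn α r M 1 w * ((w.1 : ℤ) : ℝ) = 0)
    (hdrift2 : ∑' w : ℤ × ℤ, pn α r M 1 w * ((w.2 : ℤ) : ℝ) = 0)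
    (hσnn : 0 ≤ ∑' w, pn α r M 1 w * phi w)
    (hT : LegalScheme α r M ρ T)
    (B : Finset (ℤ × ℤ)) (hB2 : ∀ k, T k ∈ B) (hB3 : ∀ k w, w ∈ F → T k + w ∈ B) :
    ∀ k x, (∑' w, pn α r M 1 w * phi w) * emitted α r M ρ T k x
      ≤ ∑ y ∈ B, conf α r M ρ T k y * phi y - ∑ y ∈ B, conf α r M ρ T 0 y * phi y
  | 0, x => by simp [emitted]
  | k + 1, x => by
      have ih := sigma_emitted_le hp0 hpF hpsum hdrift1 hdrift2 hσnn hT B hB2 hB3 k x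
      have hw := W_step (ρ := ρ) hp0 hpF hpsum hdrift1 hdrift2 B k (hB2 k) (hB3 k)
      have hek : 0 ≤ conf α r M ρ T k (T k) - 1 := by
        have := hT.1 k
        linarith
      by_cases h : x = T k
      · subst h
        have hE : emitted α r M ρ T (k+1) (T k)
            = emitted α r M ρ T k (T k) + (conf α r M ρ T k (T k) - 1) := by
          simp [emitted]
        rw [hE, mul_add, hw]
        linarith [mul_comm (∑' w, pn α r M 1 w * phi w) (conf α r M ρ T k (T k) - 1)]
      · simp only [emitted, h, if_false, add_zero]
        rw [hw]
        have hnn : 0 ≤ (conf α r M ρ T k (T k) - 1) * (∑' w, pn α r M 1 w * phi w) :=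
          mul_nonneg hek hσnn
        linarith

lemma conf_identity (hp0 : pn α r M 1 0 = 0) (hpF : ∀ z ∉ F, pn α r M 1 z = 0)
    (hpsym : ∀ z, pn α r M 1 (-z) = pn α r M 1 z) :
    ∀ k x, conf α r M ρ T k x
      = ρ x + ∑ w ∈ F, pn α r M 1 w * emitted α r M ρ T k (x + w)
        - emitted α r M ρ T k x
  | 0, x => by simp [conf, emitted]
  | k + 1, x => by
      classical
      have ih := conf_identity hp0 hpF hpsym k
      have hemit : ∀ y, emitted α r M ρ T (k + 1) y
          = emitted α r M ρ T k y
            + (if y = T k then conf α r M ρ T k (T k) - 1 else 0) := by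
        intro y
        by_cases h : y = T k
        · subst h; simp [emitted]
        · simp [emitted, h]
      have hsum : ∑ w ∈ F, pn α r M 1 w * emitted α r M ρ T (k+1) (x + w)
          = ∑ w ∈ F, pn α r M 1 w * emitted α r M ρ T k (x + w)
            + pn α r M 1 (T k - x) * (conf α r M ρ T k (T k) - 1) := by
        rw [Finset.sum_congr rfl (fun w _ => by rw [hemit (x + w)])]
        have hstep : ∀ w ∈ F, pn α r M 1 w * (emitted α r M ρ T k (x + w)
              + (if x + w = T k then conf α r M ρ T k (T k) - 1 else 0))
            = pn α r M 1 w * emitted α r M ρ T k (x + w)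
              + (if w = T k - x then pn α r M 1 w * (conf α r M ρ T k (T k) - 1) else 0) := by
          intro w _
          have hc : (x + w = T k) ↔ (w = T k - x) := eq_sub_iff_add_eq'.symm
          rw [mul_add]
          congr 1
          simp only [hc]
          by_cases h : w = T k - x <;> simp [h]
        rw [Finset.sum_congr rfl hstep, Finset.sum_add_distrib]
        congr 1
        rw [Finset.sum_ite_eq' F (T k - x)
          (fun w => pn α r M 1 w * (conf α r M ρ T k (T k) - 1))]
        by_cases hmem : T k - x ∈ F
        · rw [if_pos hmem]
        · rw [if_neg hmem, hpF _ hmem, zero_mul]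
      by_cases h : x = T k
      · have hLHS : conf α r M ρ T (k + 1) x = 1 := by
          simp [conf, topple, h]
        rw [hLHS, hsum, hemit x, if_pos h]
        rw [h, sub_self, hp0, zero_mul, add_zero]
        have hx := ih (T k)
        linarith
      · have hLHS : conf α r M ρ T (k + 1) x
            = conf α r M ρ T k x
              + (conf α r M ρ T k (T k) - 1) * pn α r M 1 (x - T k) := by
          simp [conf, topple, h]
        have hps : pn α r M 1 (T k - x) = pn α r M 1 (x - T k) := by
          rw [← neg_sub x (T k), hpsym]
        rw [hLHS, hsum, hemit x, if_neg h, add_zero, hps]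
        have hx := ih x
        linarith [mul_comm (conf α r M ρ T k (T k) - 1) (pn α r M 1 (x - T k))]

end Dyn2


open scoped Pointwise in
/-- **Existence of the limiting configuration and odometer** for any legal toppling
scheme: the configurations and emitted-mass functions converge, the limit configuration
is everywhere `≤ 1` and satisfies `ν = ρ + L_{M,1} u`. -/
theorem sandpile_limit_exists
    (α r M : ℝ) (hα : α ∈ Set.Ioo (1 : ℝ) 2) (hr : 0 < r) (hrM : r < M)
    (hk : 0 < kn α r M 1)
    (ρ : ℤ × ℤ → ℝ) (hρ0 : ∀ x, 0 ≤ ρ x) (hρfin : (Function.support ρ).Finite)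
    (T : ℕ → ℤ × ℤ) (hT : LegalScheme α r M ρ T) :
    ∃ ν u : ℤ × ℤ → ℝ,
      (∀ x, Tendsto (fun k => conf α r M ρ T k x) atTop (𝓝 (ν x))) ∧
      (∀ x, Tendsto (fun k => emitted α r M ρ T k x) atTop (𝓝 (u x))) ∧
      (∀ x, ν x ≤ 1) ∧
      (∀ x, ν x = ρ x + LMnD α r M 1 u x) := by
  classical
  have hM : 0 < M := hr.trans hrM
  set F : Finset (ℤ × ℤ) := suppF M with hF
  have hRawF : ∀ z ∉ F, pnRaw α r M 1 z = 0 := fun z hz => pnRaw_eq_zero α r M hM hz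
  have hRawS : Summable (pnRaw α r M 1) := summable_of_ne_finset_zero hRawF
  have hRawnn : ∀ z, 0 ≤ pnRaw α r M 1 z := pnRaw_nonneg α r M hk
  have hSpos : 0 < ∑' z, pnRaw α r M 1 z :=
    lt_of_lt_of_le (lt_of_lt_of_le hk (pnRaw_ge_kn α r M))
      (Summable.le_tsum hRawS (1, 0) (fun j _ => hRawnn j))
  have hcpos : 0 < cseq α r M 1 := by rw [cseq]; exact inv_pos.mpr hSpos
  have hp0 : pn α r M 1 0 = 0 := by simp [pn, pnRaw]
  have hpnn : ∀ z, 0 ≤ pn α r M 1 z := fun z => mul_nonneg hcpos.le (hRawnn z)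
  have hpF : ∀ z ∉ F, pn α r M 1 z = 0 := fun z hz => by
    rw [pn, hRawF z hz, mul_zero]
  have hpsum : ∑' z, pn α r M 1 z = 1 := by
    unfold pn
    rw [tsum_mul_left, cseq, inv_mul_cancel₀ (ne_of_gt hSpos)]
  have hpsym : ∀ z, pn α r M 1 (-z) = pn α r M 1 z := fun z => by
    unfold pn; rw [pnRaw_neg]
  have hdrift1 : ∑' w : ℤ × ℤ, pn α r M 1 w * ((w.1 : ℤ) : ℝ) = 0 := by
    apply tsum_eq_zero_of_odd
    intro w
    have h1 : ((-w).1 : ℤ) = -w.1 := rfl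
    rw [hpsym w, h1]
    push_cast
    ring
  have hdrift2 : ∑' w : ℤ × ℤ, pn α r M 1 w * ((w.2 : ℤ) : ℝ) = 0 := by
    apply tsum_eq_zero_of_odd
    intro w
    have h1 : ((-w).2 : ℤ) = -w.2 := rfl
    rw [hpsym w, h1]
    push_cast
    ring
  have hps : Summable (fun w => pn α r M 1 w * phi w) :=
    summable_of_ne_finset_zero (s := F) (fun b hb => by rw [hpF b hb, zero_mul])
  have hσpos : 0 < ∑' w, pn α r M 1 w * phi w := by
    have h10 : 0 < pn α r M 1 (1, 0) * phi (1, 0) := by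
      have hp : 0 < pn α r M 1 (1, 0) :=
        mul_pos hcpos (lt_of_lt_of_le hk (pnRaw_ge_kn α r M))
      have hφ : phi ((1, 0) : ℤ × ℤ) = 1 := by norm_num [phi]
      rw [hφ, mul_one]; exact hp
    exact lt_of_lt_of_le h10
      (Summable.le_tsum hps (1, 0) (fun j _ => mul_nonneg (hpnn j) (phi_nonneg j)))
  have hρs : Summable ρ := summable_of_ne_finset_zero (s := hρfin.toFinset)
    (fun b hb => Function.notMem_support.mp (fun hmem => hb (hρfin.mem_toFinset.mpr hmem)))
  have hA : (Set.range T).Finite := range_T_finite hp0 hpnn hpF hpsum hρ0 hρs hT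
  set B : Finset (ℤ × ℤ) := hρfin.toFinset ∪ hA.toFinset ∪ (hA.toFinset + F) with hB
  have hB2 : ∀ k, T k ∈ B := fun k =>
    Finset.mem_union_left _
      (Finset.mem_union_right _ (hA.mem_toFinset.mpr (Set.mem_range_self k)))
  have hB3 : ∀ k w, w ∈ F → T k + w ∈ B := fun k w hw =>
    Finset.mem_union_right _
      (Finset.add_mem_add (hA.mem_toFinset.mpr (Set.mem_range_self k)) hw)
  set m₀ := ∑' y, ρ y with hm0
  -- uniform bound on the emitted mass
  have hbound : ∀ k x, emitted α r M ρ T k x ≤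
      (∑ y ∈ B, m₀ * phi y - ∑ y ∈ B, conf α r M ρ T 0 y * phi y) /
        (∑' w, pn α r M 1 w * phi w) := by
    intro k x
    have h1 := sigma_emitted_le hp0 hpF hpsum hdrift1 hdrift2 hσpos.le hT B hB2 hB3 k x
    have h2 : ∑ y ∈ B, conf α r M ρ T k y * phi y ≤ ∑ y ∈ B, m₀ * phi y :=
      Finset.sum_le_sum (fun y _ => mul_le_mul_of_nonneg_right
        (conf_le_total hp0 hpnn hpF hpsum hρ0 hρs hT k y) (phi_nonneg y))
    rw [le_div_iff₀ hσpos]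
    calc emitted α r M ρ T k x * (∑' w, pn α r M 1 w * phi w)
        = (∑' w, pn α r M 1 w * phi w) * emitted α r M ρ T k x := mul_comm _ _
      _ ≤ ∑ y ∈ B, conf α r M ρ T k y * phi y - ∑ y ∈ B, conf α r M ρ T 0 y * phi y := h1
      _ ≤ ∑ y ∈ B, m₀ * phi y - ∑ y ∈ B, conf α r M ρ T 0 y * phi y := by linarith
  have hmono : ∀ x, Monotone (fun k => emitted α r M ρ T k x) := fun x =>
    monotone_nat_of_le_succ (fun k => emitted_mono hT k x)
  have hbdd : ∀ x, BddAbove (Set.range (fun k => emitted α r M ρ T k x)) := fun x =>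
    ⟨_, by rintro v ⟨k, rfl⟩; exact hbound k x⟩
  have hcu : ∀ x, ∃ L, Tendsto (fun k => emitted α r M ρ T k x) atTop (𝓝 L) :=
    fun x => ⟨_, tendsto_atTop_ciSup (hmono x) (hbdd x)⟩
  choose u hconvu using hcu
  have hconvν : ∀ x, Tendsto (fun k => conf α r M ρ T k x) atTop
      (𝓝 (ρ x + ∑ w ∈ F, pn α r M 1 w * u (x + w) - u x)) := by
    intro x
    have h1 : Tendsto (fun k => ρ x + ∑ w ∈ F, pn α r M 1 w * emitted α r M ρ T k (x + w)
        - emitted α r M ρ T k x) atTop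
        (𝓝 (ρ x + ∑ w ∈ F, pn α r M 1 w * u (x + w) - u x)) := by
      apply Tendsto.sub _ (hconvu x)
      apply Tendsto.const_add
      exact tendsto_finset_sum F (fun w _ => (hconvu (x + w)).const_mul _)
    exact h1.congr (fun k => (conf_identity hp0 hpF hpsym k x).symm)
  refine ⟨fun x => ρ x + ∑ w ∈ F, pn α r M 1 w * u (x + w) - u x, u,
    hconvν, hconvu, ?_, ?_⟩
  · intro x
    show ρ x + ∑ w ∈ F, pn α r M 1 w * u (x + w) - u x ≤ 1
    by_contra hgt
    push_neg at hgt
    have hev : ∀ᶠ k in atTop, 1 < conf α r M ρ T k x :=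
      (hconvν x).eventually_const_lt hgt
    obtain ⟨k₀, hk₀⟩ := hev.exists
    have hfreq : ∃ᶠ k in atTop, conf α r M ρ T k x = 1 := by
      rw [frequently_atTop]
      intro N
      obtain ⟨j, hjN, hjx⟩ := hT.2 k₀ x hk₀.le N
      refine ⟨j + 1, by omega, ?_⟩
      simp [conf, topple, hjx]
    obtain ⟨k, h1k, h2k⟩ := (hev.and_frequently hfreq).exists
    rw [h2k] at h1k
    exact lt_irrefl 1 h1k
  · intro x
    show ρ x + ∑ w ∈ F, pn α r M 1 w * u (x + w) - u x = ρ x + LMnD α r M 1 u x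
    have hsum1F : ∑ w ∈ F, pn α r M 1 w = 1 := by
      rw [← tsum_eq_sum (L := SummationFilter.unconditional _) hpF]; exact hpsum
    have hLM : LMnD α r M 1 u x = ∑ w ∈ F, pn α r M 1 w * u (x + w) - u x := by
      unfold LMnD
      rw [Nat.cast_one, Real.one_rpow, one_mul]
      rw [tsum_eq_sum (s := F) (fun w hw => by rw [hpF w hw, zero_mul])]
      simp only [mul_sub]
      rw [Finset.sum_sub_distrib, ← Finset.sum_mul, hsum1F, one_mul]
    rw [hLM]
    ring


end TruncatedSandpile
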